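/- Let {x_i} be a Markov chain on a state space 𝒳 satisfying uniform geometric mixing: sup_x ‖P(x_k ∈ · | x_0 = x) − μ(·)‖_TV ≤ κρ^k for all k ≥ 0, where μ is the stationary distribution, κ > 0, ρ ∈ (0,1). Let X : 𝒳 → ℝ^{d×d} (or ℝ^d) be measurable with ‖X(x)‖_F ≤ C_x for all x, and let X̃ = E_μ[X]. For any starting time t₀ and batch size M > 0, define X(ℳ) = (1/M)∑_{i=t₀}^{t₀+M−1} X(x_i). Then E[‖X(ℳ) − X̃‖²] ≤ 8 C_x² [1 + (κ−1)ρ] / ((1−ρ) M). -/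

import Mathlib

open MeasureTheory ProbabilityTheory
open scoped RealInnerProductSpace

/-- `k`-step transition kernel of a time-homogeneous Markov chain. -/
noncomputable def kpow {𝒳 : Type*} [MeasurableSpace 𝒳] (P : Kernel 𝒳 𝒳) : ℕ → Kernel 𝒳 𝒳
  | 0 => Kernel.id
  | n + 1 => (kpow P n).comp P

instance kpow_markov {𝒳 : Type*} [MeasurableSpace 𝒳] (P : Kernel 𝒳 𝒳) [IsMarkovKernel P] :
    ∀ k, IsMarkovKernel (kpow P k)
  | 0 => by rw [kpow]; infer_instance
  | (n+1) => by rw [kpow]; haveI := kpow_markov P n; infer_instance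

/-- Layer-cake comparison: one-sided bound for the difference of integrals of a bounded
measurable function against two probability measures that are `ε`-close on all
measurable sets. -/
lemma real_tv_bound {𝒳 : Type*} [MeasurableSpace 𝒳] (ν μ : Measure 𝒳)
    [IsProbabilityMeasure ν] [IsProbabilityMeasure μ] {g : 𝒳 → ℝ} (hg : Measurable g)
    {C ε : ℝ} (hC : 0 ≤ C) (hgb : ∀ s, |g s| ≤ C)
    (h : ∀ A : Set 𝒳, MeasurableSet A → |(ν A).toReal - (μ A).toReal| ≤ ε) :
    ∫ s, g s ∂ν - ∫ s, g s ∂μ ≤ 2 * C * ε := by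
  classical
  set f : 𝒳 → ℝ := fun s => g s + C with hfdef
  have hf0 : ∀ s, 0 ≤ f s := fun s => by
    have := (abs_le.1 (hgb s)).1; simp only [hfdef]; linarith
  have hfC : ∀ s, f s ≤ 2 * C := fun s => by
    have := (abs_le.1 (hgb s)).2; simp only [hfdef]; linarith
  have hfm : Measurable f := hg.add_const C
  have hgint : ∀ (m : Measure 𝒳) [IsProbabilityMeasure m], Integrable g m := by
    intro m _
    exact (integrable_const C).mono' hg.aestronglyMeasurable
      (Filter.Eventually.of_forall fun s => by rw [Real.norm_eq_abs]; exact hgb s)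
  have hint : ∀ (m : Measure 𝒳) [IsProbabilityMeasure m], Integrable f m :=
    fun m _ => (hgint m).add (integrable_const C)
  have hieq : ∀ (m : Measure 𝒳) [IsProbabilityMeasure m], ∫ s, f s ∂m = ∫ s, g s ∂m + C := by
    intro m _
    simp only [hfdef]
    rw [integral_add (hgint m) (integrable_const C), integral_const, probReal_univ,
      one_smul]
  have hdiff : ∫ s, g s ∂ν - ∫ s, g s ∂μ = ∫ s, f s ∂ν - ∫ s, f s ∂μ := by
    rw [hieq ν, hieq μ]; ring
  have hlc : ∀ (m : Measure 𝒳) [IsProbabilityMeasure m],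
      ∫ s, f s ∂m = ∫ t in Set.Ioi (0:ℝ), ((m {a | t < f a}).toReal) := by
    intro m _
    exact (hint m).integral_eq_integral_meas_lt (Filter.Eventually.of_forall hf0)
  have hlayer_int : ∀ (m : Measure 𝒳) [IsProbabilityMeasure m],
      IntegrableOn (fun t : ℝ => (m {a | t < f a}).toReal) (Set.Ioi (0:ℝ)) := by
    intro m _
    have hmono : Antitone fun t : ℝ => (m {a | t < f a}).toReal := by
      intro t₁ t₂ hle
      exact ENNReal.toReal_mono (measure_ne_top m _)
        (measure_mono fun a ha => lt_of_le_of_lt hle ha)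
    refine Integrable.mono' (g := Set.indicator (Set.Ioc (0:ℝ) (2*C)) fun _ => (1:ℝ)) ?_
      (hmono.measurable.aestronglyMeasurable) ?_
    · rw [integrable_indicator_iff measurableSet_Ioc]
      exact integrableOn_const (C := (1:ℝ)) (hs := measure_Ioc_lt_top.ne)
    · refine (ae_restrict_iff' measurableSet_Ioi).2 (Filter.Eventually.of_forall fun t ht => ?_)
      by_cases htc : t ≤ 2*C
      · rw [Set.indicator_of_mem (Set.mem_Ioc.2 ⟨ht, htc⟩)]
        rw [Real.norm_eq_abs, abs_of_nonneg ENNReal.toReal_nonneg]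
        calc (m {a | t < f a}).toReal ≤ (m Set.univ).toReal :=
            ENNReal.toReal_mono (measure_ne_top _ _) (measure_mono (Set.subset_univ _))
          _ = 1 := by simp
      · rw [Set.indicator_of_notMem (fun hmem => htc (Set.mem_Ioc.1 hmem).2)]
        have : {a | t < f a} = ∅ := by
          ext a; simp only [Set.mem_setOf_eq, Set.mem_empty_iff_false, iff_false, not_lt]
          exact le_trans (hfC a) (le_of_not_ge htc)
        simp [this]
  rw [hdiff, hlc ν, hlc μ, ← integral_sub (hlayer_int ν) (hlayer_int μ)]
  have hsplit : Set.Ioi (0:ℝ) = Set.Ioc (0:ℝ) (2*C) ∪ Set.Ioi (2*C) :=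
    (Set.Ioc_union_Ioi_eq_Ioi (by linarith)).symm
  set F : ℝ → ℝ := fun t => (ν {a | t < f a}).toReal - (μ {a | t < f a}).toReal with hF
  have hFsub1 : IntegrableOn F (Set.Ioc (0:ℝ) (2*C)) := by
    refine Integrable.mono_measure (((hlayer_int ν).sub (hlayer_int μ))) ?_
    exact Measure.restrict_mono (by rw [hsplit]; exact Set.subset_union_left) le_rfl
  have hFsub2 : IntegrableOn F (Set.Ioi (2*C)) := by
    refine Integrable.mono_measure (((hlayer_int ν).sub (hlayer_int μ))) ?_
    exact Measure.restrict_mono (by rw [hsplit]; exact Set.subset_union_right) le_rfl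
  rw [hsplit, setIntegral_union (Set.Ioc_disjoint_Ioi le_rfl) measurableSet_Ioi hFsub1 hFsub2]
  have h2 : ∫ t in Set.Ioi (2*C), F t = 0 := by
    refine setIntegral_eq_zero_of_forall_eq_zero fun t ht => ?_
    have : {a | t < f a} = ∅ := by
      ext a; simp only [Set.mem_setOf_eq, Set.mem_empty_iff_false, iff_false, not_lt]
      exact le_trans (hfC a) (le_of_lt ht)
    simp [hF, this]
  have h1 : ∫ t in Set.Ioc (0:ℝ) (2*C), F t ≤ 2 * C * ε := by
    have hb : ∀ t ∈ Set.Ioc (0:ℝ) (2*C), F t ≤ ε := by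
      intro t _
      have hA : MeasurableSet {a | t < f a} := hfm measurableSet_Ioi
      exact le_trans (le_abs_self _) (h _ hA)
    calc ∫ t in Set.Ioc (0:ℝ) (2*C), F t ≤ ∫ _t in Set.Ioc (0:ℝ) (2*C), ε :=
        setIntegral_mono_on hFsub1 (integrableOn_const (hs := measure_Ioc_lt_top.ne))
          measurableSet_Ioc hb
      _ = 2 * C * ε := by
        rw [setIntegral_const, measureReal_def, Real.volume_Ioc, smul_eq_mul,
          ENNReal.toReal_ofReal (by linarith : (0:ℝ) ≤ 2*C - 0)]
        ring
  linarith

/-- Total-variation bound for vector-valued integrals. -/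
lemma vec_tv_bound {𝒳 : Type*} [MeasurableSpace 𝒳] {n : Type*} [Fintype n]
    (ν μ : Measure 𝒳) [IsProbabilityMeasure ν] [IsProbabilityMeasure μ]
    {X : 𝒳 → EuclideanSpace ℝ n} (hX : Measurable X) {C ε : ℝ} (hC : 0 ≤ C) (hε : 0 ≤ ε)
    (hbd : ∀ s, ‖X s‖ ≤ C)
    (h : ∀ A : Set 𝒳, MeasurableSet A → |(ν A).toReal - (μ A).toReal| ≤ ε) :
    ‖∫ s, X s ∂ν - ∫ s, X s ∂μ‖ ≤ 2 * C * ε := by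
  have hXint : ∀ (m : Measure 𝒳) [IsProbabilityMeasure m], Integrable X m := fun m _ =>
    (integrable_const C).mono' hX.aestronglyMeasurable (Filter.Eventually.of_forall hbd)
  set v := ∫ s, X s ∂ν - ∫ s, X s ∂μ with hv
  rcases eq_or_ne v 0 with h0 | h0
  · rw [h0, norm_zero]; positivity
  · set u := ‖v‖⁻¹ • v with hu
    have hnu : ‖u‖ = 1 := norm_smul_inv_norm h0
    have hvne : ‖v‖ ≠ 0 := norm_ne_zero_iff.2 h0
    have hvu : ‖v‖ = ⟪u, v⟫ := by
      rw [hu, real_inner_smul_left, real_inner_self_eq_norm_sq]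
      field_simp
    rw [hvu, hv, inner_sub_right, ← integral_inner (hXint ν) u, ← integral_inner (hXint μ) u]
    exact real_tv_bound ν μ (Measurable.inner measurable_const hX) hC
      (fun s => le_trans (abs_real_inner_le_norm u (X s)) (by rw [hnu, one_mul]; exact hbd s)) h

/-- Second-moment bound for a Markovian mini-batch average of a bounded
(matrix-valued, Frobenius norm) function under uniform geometric mixing. -/
theorem markov_minibatch_variance {𝒳 : Type*} [MeasurableSpace 𝒳] {d : ℕ}
    (P : Kernel 𝒳 𝒳) [IsMarkovKernel P] (μ : Measure 𝒳) [IsProbabilityMeasure μ]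
    (hstat : μ.bind (fun s => P s) = μ)
    (κ ρ : ℝ) (hκ : 0 < κ) (hρ : ρ ∈ Set.Ioo (0 : ℝ) 1)
    (hmix : ∀ (x : 𝒳) (k : ℕ) (A : Set 𝒳), MeasurableSet A →
      |((kpow P k x) A).toReal - (μ A).toReal| ≤ κ * ρ ^ k)
    (X : 𝒳 → EuclideanSpace ℝ (Fin d × Fin d)) (Cx : ℝ) (hX : Measurable X)
    (hbd : ∀ x, ‖X x‖ ≤ Cx)
    {Ω : Type*} [MeasurableSpace Ω] (Pr : Measure Ω) [IsProbabilityMeasure Pr]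
    (x : ℕ → Ω → 𝒳) (hx : ∀ i, Measurable (x i))
    (hMarkov : ∀ (i k : ℕ) (A B : Set 𝒳), MeasurableSet A → MeasurableSet B →
      Pr {ω | x i ω ∈ A ∧ x (i + k) ω ∈ B} =
        ∫⁻ s in A, (kpow P k s) B ∂(Pr.map (x i)))
    (t₀ M : ℕ) (hM : 0 < M) :
    ∫ ω, ‖(M : ℝ)⁻¹ • ∑ i ∈ Finset.range M, X (x (t₀ + i) ω) - ∫ s, X s ∂μ‖ ^ 2 ∂Pr ≤
      8 * Cx ^ 2 * (1 + (κ - 1) * ρ) / ((1 - ρ) * M) := by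
  classical
  obtain ⟨hρ0, hρ1⟩ := hρ
  have hΩ : Nonempty Ω := by
    rcases isEmpty_or_nonempty Ω with hE | hNE
    · exfalso
      have h1 : Pr Set.univ = 1 := measure_univ
      rw [Set.univ_eq_empty_iff.2 hE] at h1
      simp at h1
    · exact hNE
  have hCx : 0 ≤ Cx := le_trans (norm_nonneg _) (hbd (x 0 (Classical.choice hΩ)))
  set Xb : EuclideanSpace ℝ (Fin d × Fin d) := ∫ s, X s ∂μ with hXb
  have hYbd : ∀ s, ‖X s - Xb‖ ≤ 2*Cx := by
    intro s
    refine (norm_sub_le _ _).trans ?_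
    have hXbnorm : ‖Xb‖ ≤ Cx := by
      rw [hXb]
      simpa using norm_integral_le_of_norm_le_const (μ := μ)
        (Filter.Eventually.of_forall hbd)
    linarith [hbd s]
  have hXint : ∀ (m : Measure 𝒳), IsProbabilityMeasure m → Integrable X m := fun m hm =>
    (integrable_const Cx).mono' hX.aestronglyMeasurable (Filter.Eventually.of_forall hbd)
  have hinner_bd : ∀ (a b : 𝒳), ‖⟪X a - Xb, X b - Xb⟫‖ ≤ 4 * Cx^2 := by
    intro a b
    rw [Real.norm_eq_abs]
    refine (abs_real_inner_le_norm _ _).trans ?_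
    calc ‖X a - Xb‖ * ‖X b - Xb‖ ≤ (2*Cx) * (2*Cx) :=
        mul_le_mul (hYbd a) (hYbd b) (norm_nonneg _) (by linarith)
      _ = 4 * Cx^2 := by ring
  have hinner_meas : ∀ i j : ℕ, Measurable (fun ω => ⟪X (x i ω) - Xb, X (x j ω) - Xb⟫) :=
    fun i j => Measurable.inner ((hX.comp (hx i)).sub measurable_const)
      ((hX.comp (hx j)).sub measurable_const)
  have hinner_int : ∀ i j : ℕ, Integrable (fun ω => ⟪X (x i ω) - Xb, X (x j ω) - Xb⟫) Pr :=
    fun i j => (integrable_const (4*Cx^2)).mono' (hinner_meas i j).aestronglyMeasurable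
      (Filter.Eventually.of_forall fun ω => hinner_bd _ _)
  -- cross-term bound via the Markov property and mixing
  have cross : ∀ a k : ℕ, ∫ ω, ⟪X (x a ω) - Xb, X (x (a+k) ω) - Xb⟫ ∂Pr
      ≤ 4 * Cx^2 * (κ * ρ^k) := by
    intro a k
    set ν := Pr.map (x a) with hν
    haveI : IsProbabilityMeasure ν := Measure.isProbabilityMeasure_map (hx a).aemeasurable
    haveI : IsMarkovKernel (kpow P k) := kpow_markov P k
    have hρk : 0 ≤ κ * ρ^k := by positivity
    have hprodmeas : Measurable (fun ω => (x a ω, x (a+k) ω)) := (hx a).prodMk (hx (a+k))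
    have hjoint : Pr.map (fun ω => (x a ω, x (a+k) ω)) = ν.compProd (kpow P k) := by
      refine MeasureTheory.ext_of_generate_finite _ generateFrom_prod.symm isPiSystem_prod ?_ ?_
      · rintro s ⟨A, hA, B, hB, rfl⟩
        simp only [Set.mem_setOf_eq] at hA hB
        rw [Measure.map_apply hprodmeas (hA.prod hB), Measure.compProd_apply_prod hA hB]
        have hpre : (fun ω => (x a ω, x (a+k) ω)) ⁻¹' (A ×ˢ B)
            = {ω | x a ω ∈ A ∧ x (a+k) ω ∈ B} := rfl
        rw [hpre]
        exact hMarkov a k A B hA hB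
      · haveI : IsProbabilityMeasure (Pr.map (fun ω => (x a ω, x (a+k) ω))) :=
          Measure.isProbabilityMeasure_map hprodmeas.aemeasurable
        simp [measure_univ]
    set g : 𝒳 × 𝒳 → ℝ := fun p => ⟪X p.1 - Xb, X p.2 - Xb⟫ with hg
    have hgmeas : Measurable g := Measurable.inner
      ((hX.comp measurable_fst).sub measurable_const)
      ((hX.comp measurable_snd).sub measurable_const)
    have hgint : Integrable g (ν.compProd (kpow P k)) :=
      (integrable_const (4*Cx^2)).mono' hgmeas.aestronglyMeasurable
        (Filter.Eventually.of_forall fun p => hinner_bd _ _)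
    have h1 : ∫ ω, ⟪X (x a ω) - Xb, X (x (a+k) ω) - Xb⟫ ∂Pr
        = ∫ p, g p ∂(ν.compProd (kpow P k)) := by
      rw [← hjoint]
      exact (integral_map hprodmeas.aemeasurable hgmeas.aestronglyMeasurable).symm
    rw [h1, Measure.integral_compProd hgint]
    have hkint : ∀ s : 𝒳, Integrable (fun b => X b - Xb) ((kpow P k) s) :=
      fun s => (hXint _ inferInstance).sub (integrable_const _)
    have hpt : ∀ s : 𝒳, ∫ b, g (s, b) ∂((kpow P k) s) ≤ 4 * Cx^2 * (κ * ρ^k) := by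
      intro s
      have hi1 : ∫ b, g (s, b) ∂((kpow P k) s) = ⟪X s - Xb, ∫ b, (X b - Xb) ∂((kpow P k) s)⟫ :=
        integral_inner (hkint s) (X s - Xb)
      rw [hi1]
      have hi2 : ∫ b, (X b - Xb) ∂((kpow P k) s) = (∫ b, X b ∂((kpow P k) s)) - Xb := by
        rw [integral_sub (hXint _ inferInstance) (integrable_const _), integral_const,
          probReal_univ, one_smul]
      rw [hi2]
      calc ⟪X s - Xb, (∫ b, X b ∂((kpow P k) s)) - Xb⟫
          ≤ ‖X s - Xb‖ * ‖(∫ b, X b ∂((kpow P k) s)) - Xb‖ := real_inner_le_norm _ _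
        _ ≤ (2*Cx) * (2 * Cx * (κ * ρ^k)) := by
            refine mul_le_mul (hYbd s) ?_ (norm_nonneg _) (by linarith)
            rw [hXb]
            exact vec_tv_bound ((kpow P k) s) μ hX hCx hρk hbd (fun A hA => hmix s k A hA)
        _ = 4 * Cx^2 * (κ * ρ^k) := by ring
    have hFm : StronglyMeasurable (fun s => ∫ b, (X b - Xb) ∂((kpow P k) s)) := by
      have hsm : StronglyMeasurable (fun p : 𝒳 × 𝒳 => X p.2 - Xb) :=
        ((hX.comp measurable_snd).sub measurable_const).stronglyMeasurable
      exact hsm.integral_kernel_prod_right'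
    have hFint : Integrable (fun s => ∫ b, g (s, b) ∂((kpow P k) s)) ν := by
      have heq : (fun s => ∫ b, g (s, b) ∂((kpow P k) s))
          = fun s => ⟪X s - Xb, ∫ b, (X b - Xb) ∂((kpow P k) s)⟫ :=
        funext fun s => integral_inner (hkint s) (X s - Xb)
      rw [heq]
      refine (integrable_const (4*Cx^2)).mono'
        (Measurable.inner (hX.sub measurable_const) hFm.measurable).aestronglyMeasurable
        (Filter.Eventually.of_forall fun s => ?_)
      rw [Real.norm_eq_abs]
      refine (abs_real_inner_le_norm _ _).trans ?_
      have hn : ‖∫ b, (X b - Xb) ∂((kpow P k) s)‖ ≤ 2*Cx := by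
        simpa using norm_integral_le_of_norm_le_const (μ := (kpow P k) s)
          (Filter.Eventually.of_forall hYbd)
      calc ‖X s - Xb‖ * ‖∫ b, (X b - Xb) ∂((kpow P k) s)‖ ≤ (2*Cx)*(2*Cx) :=
          mul_le_mul (hYbd s) hn (norm_nonneg _) (by linarith)
        _ = 4*Cx^2 := by ring
    calc ∫ s, ∫ b, g (s, b) ∂((kpow P k) s) ∂ν ≤ ∫ _s, 4 * Cx^2 * (κ * ρ^k) ∂ν :=
        integral_mono hFint (integrable_const _) hpt
      _ = 4 * Cx^2 * (κ * ρ^k) := by simp [measure_univ]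
  -- diagonal bound
  have diag : ∀ a : ℕ, ∫ ω, ⟪X (x a ω) - Xb, X (x a ω) - Xb⟫ ∂Pr ≤ 4 * Cx^2 := by
    intro a
    have hstep : ∀ ω, ⟪X (x a ω) - Xb, X (x a ω) - Xb⟫ ≤ 4*Cx^2 := by
      intro ω
      rw [real_inner_self_eq_norm_sq]
      have h1 := hYbd (x a ω)
      nlinarith [norm_nonneg (X (x a ω) - Xb)]
    have hmono := integral_mono (hinner_int a a) (integrable_const (4*Cx^2)) hstep
    simpa [measure_univ] using hmono
  -- geometric sums
  have hgeom : ∀ n : ℕ, ∑ j ∈ Finset.range n, ρ^(j+1) ≤ ρ / (1-ρ) := by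
    intro n
    have h2 : ∑ j ∈ Finset.range n, ρ^j ≤ 1 / (1-ρ) := by
      rw [geom_sum_eq (ne_of_lt hρ1) n]
      have heq : (ρ^n - 1)/(ρ - 1) = (1 - ρ^n)/(1 - ρ) := by
        rw [← neg_div_neg_eq]; ring_nf
      rw [heq, div_le_div_iff₀ (by linarith) (by linarith)]
      nlinarith [pow_nonneg hρ0.le n]
    have h3 : ∑ j ∈ Finset.range n, ρ^(j+1) = ρ * ∑ j ∈ Finset.range n, ρ^j := by
      rw [Finset.mul_sum]; exact Finset.sum_congr rfl fun j _ => by ring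
    calc ∑ j ∈ Finset.range n, ρ^(j+1) = ρ * ∑ j ∈ Finset.range n, ρ^j := h3
      _ ≤ ρ * (1/(1-ρ)) := mul_le_mul_of_nonneg_left h2 hρ0.le
      _ = ρ/(1-ρ) := by ring
  set T : ℕ → ℕ → ℝ := fun i j => ∫ ω, ⟪X (x (t₀+i) ω) - Xb, X (x (t₀+j) ω) - Xb⟫ ∂Pr with hT
  have rowbound : ∀ i ∈ Finset.range M, ∑ j ∈ Finset.range M, T i j
      ≤ 4*Cx^2 * (1 + 2*κ*ρ/(1-ρ)) := by
    intro i hi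
    have hiM : i < M := Finset.mem_range.1 hi
    have hCκ : (0:ℝ) ≤ 4*Cx^2*κ := mul_nonneg (by positivity) hκ.le
    have hsplit : Finset.range M = insert i ((Finset.range i) ∪ (Finset.Ico (i+1) M)) := by
      ext j
      simp only [Finset.mem_insert, Finset.mem_union, Finset.mem_range, Finset.mem_Ico]
      omega
    rw [hsplit, Finset.sum_insert (by
        simp only [Finset.mem_union, Finset.mem_range, Finset.mem_Ico]; omega),
      Finset.sum_union (by
        rw [Finset.disjoint_left]; intro j hj1 hj2
        simp only [Finset.mem_range] at hj1
        simp only [Finset.mem_Ico] at hj2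
        omega)]
    have hdg : T i i ≤ 4*Cx^2 := diag (t₀+i)
    have hlow : ∑ j ∈ Finset.range i, T i j ≤ 4*Cx^2*κ*(ρ/(1-ρ)) := by
      have hple : ∀ j ∈ Finset.range i, T i j ≤ 4*Cx^2*(κ*ρ^(i-j)) := by
        intro j hj
        have hji : j < i := Finset.mem_range.1 hj
        have heq : T i j = ∫ ω, ⟪X (x (t₀+j) ω) - Xb, X (x ((t₀+j)+(i-j)) ω) - Xb⟫ ∂Pr := by
          have hidx : (t₀+j)+(i-j) = t₀+i := by omega
          rw [hidx]
          exact integral_congr_ae (Filter.Eventually.of_forall fun ω => real_inner_comm _ _)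
        rw [heq]; exact cross (t₀+j) (i-j)
      have href : ∑ j ∈ Finset.range i, ρ^(i-j) = ∑ j ∈ Finset.range i, ρ^(j+1) := by
        rw [← Finset.sum_range_reflect (fun j => ρ^(i-j)) i]
        exact Finset.sum_congr rfl fun j hj => by
          have := Finset.mem_range.1 hj; congr 1; omega
      calc ∑ j ∈ Finset.range i, T i j ≤ ∑ j ∈ Finset.range i, 4*Cx^2*(κ*ρ^(i-j)) :=
          Finset.sum_le_sum hple
        _ = 4*Cx^2*κ * ∑ j ∈ Finset.range i, ρ^(i-j) := by
            rw [Finset.mul_sum]; exact Finset.sum_congr rfl fun j _ => by ring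
        _ = 4*Cx^2*κ * ∑ j ∈ Finset.range i, ρ^(j+1) := by rw [href]
        _ ≤ 4*Cx^2*κ*(ρ/(1-ρ)) := mul_le_mul_of_nonneg_left (hgeom i) hCκ
    have hhigh : ∑ j ∈ Finset.Ico (i+1) M, T i j ≤ 4*Cx^2*κ*(ρ/(1-ρ)) := by
      have hple : ∀ j ∈ Finset.Ico (i+1) M, T i j ≤ 4*Cx^2*(κ*ρ^(j-i)) := by
        intro j hj
        have hij : i < j := (Finset.mem_Ico.1 hj).1
        have heq : T i j = ∫ ω, ⟪X (x (t₀+i) ω) - Xb, X (x ((t₀+i)+(j-i)) ω) - Xb⟫ ∂Pr := by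
          have hidx : (t₀+i)+(j-i) = t₀+j := by omega
          rw [hidx]
        rw [heq]; exact cross (t₀+i) (j-i)
      calc ∑ j ∈ Finset.Ico (i+1) M, T i j ≤ ∑ j ∈ Finset.Ico (i+1) M, 4*Cx^2*(κ*ρ^(j-i)) :=
          Finset.sum_le_sum hple
        _ = ∑ j ∈ Finset.range (M-(i+1)), 4*Cx^2*(κ*ρ^(j+1)) := by
            rw [Finset.sum_Ico_eq_sum_range]
            exact Finset.sum_congr rfl fun j hj => by
              have h : i + 1 + j - i = j + 1 := by omega
              rw [h]
        _ = 4*Cx^2*κ * ∑ j ∈ Finset.range (M-(i+1)), ρ^(j+1) := by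
            rw [Finset.mul_sum]; exact Finset.sum_congr rfl fun j _ => by ring
        _ ≤ 4*Cx^2*κ*(ρ/(1-ρ)) := mul_le_mul_of_nonneg_left (hgeom _) hCκ
    have harith : 4*Cx^2 + (4*Cx^2*κ*(ρ/(1-ρ)) + 4*Cx^2*κ*(ρ/(1-ρ)))
        = 4*Cx^2 * (1 + 2*κ*ρ/(1-ρ)) := by
      field_simp
      ring
    linarith
  -- expansion of the squared norm
  have hMne : (M:ℝ) ≠ 0 := Nat.cast_ne_zero.2 hM.ne'
  have expand : ∫ ω, ‖(M:ℝ)⁻¹ • ∑ i ∈ Finset.range M, X (x (t₀+i) ω) - Xb‖^2 ∂Pr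
      = ((M:ℝ)⁻¹)^2 * ∑ i ∈ Finset.range M, ∑ j ∈ Finset.range M, T i j := by
    have hpt : ∀ ω, ‖(M:ℝ)⁻¹ • ∑ i ∈ Finset.range M, X (x (t₀+i) ω) - Xb‖^2
        = ((M:ℝ)⁻¹)^2 * ∑ i ∈ Finset.range M, ∑ j ∈ Finset.range M,
            ⟪X (x (t₀+i) ω) - Xb, X (x (t₀+j) ω) - Xb⟫ := by
      intro ω
      have h1 : (M:ℝ)⁻¹ • ∑ i ∈ Finset.range M, X (x (t₀+i) ω) - Xb
          = (M:ℝ)⁻¹ • ∑ i ∈ Finset.range M, (X (x (t₀+i) ω) - Xb) := by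
        rw [Finset.sum_sub_distrib, smul_sub, Finset.sum_const, Finset.card_range,
          ← Nat.cast_smul_eq_nsmul ℝ, smul_smul, inv_mul_cancel₀ hMne, one_smul]
      rw [h1, norm_smul, mul_pow]
      congr 1
      · rw [Real.norm_eq_abs, sq_abs]
      · rw [← real_inner_self_eq_norm_sq]
        rw [sum_inner]
        exact Finset.sum_congr rfl fun i _ => inner_sum _ _ _
    calc ∫ ω, ‖(M:ℝ)⁻¹ • ∑ i ∈ Finset.range M, X (x (t₀+i) ω) - Xb‖^2 ∂Pr
        = ∫ ω, ((M:ℝ)⁻¹)^2 * ∑ i ∈ Finset.range M, ∑ j ∈ Finset.range M,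
            ⟪X (x (t₀+i) ω) - Xb, X (x (t₀+j) ω) - Xb⟫ ∂Pr :=
          integral_congr_ae (Filter.Eventually.of_forall hpt)
      _ = ((M:ℝ)⁻¹)^2 * ∫ ω, ∑ i ∈ Finset.range M, ∑ j ∈ Finset.range M,
            ⟪X (x (t₀+i) ω) - Xb, X (x (t₀+j) ω) - Xb⟫ ∂Pr := integral_const_mul _ _
      _ = ((M:ℝ)⁻¹)^2 * ∑ i ∈ Finset.range M, ∑ j ∈ Finset.range M, T i j := by
          congr 1
          rw [integral_finset_sum _ (fun i _ =>
            integrable_finset_sum _ (fun j _ => hinner_int _ _))]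
          exact Finset.sum_congr rfl fun i _ =>
            integral_finset_sum _ (fun j _ => hinner_int _ _)
  rw [expand]
  have htot : ∑ i ∈ Finset.range M, ∑ j ∈ Finset.range M, T i j
      ≤ M * (4*Cx^2*(1 + 2*κ*ρ/(1-ρ))) := by
    calc ∑ i ∈ Finset.range M, ∑ j ∈ Finset.range M, T i j
        ≤ ∑ _i ∈ Finset.range M, 4*Cx^2*(1 + 2*κ*ρ/(1-ρ)) := Finset.sum_le_sum rowbound
      _ = M * (4*Cx^2*(1 + 2*κ*ρ/(1-ρ))) := by
          rw [Finset.sum_const, Finset.card_range, nsmul_eq_mul]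
  have h1ρ : (0:ℝ) < 1 - ρ := by linarith
  have hMpos : (0:ℝ) < M := Nat.cast_pos.2 hM
  have hfac : (0:ℝ) ≤ 1 + 2*κ*ρ/(1-ρ) := by positivity
  calc ((M:ℝ)⁻¹)^2 * ∑ i ∈ Finset.range M, ∑ j ∈ Finset.range M, T i j
      ≤ ((M:ℝ)⁻¹)^2 * (M * (4*Cx^2*(1 + 2*κ*ρ/(1-ρ)))) :=
        mul_le_mul_of_nonneg_left htot (by positivity)
    _ = (4*Cx^2*(1 + 2*κ*ρ/(1-ρ)))/M := by field_simp
    _ ≤ 8 * Cx^2 * (1 + (κ-1)*ρ) / ((1-ρ)*M) := by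
        rw [div_le_div_iff₀ hMpos (by positivity)]
        have hkey : (4*Cx^2*(1 + 2*κ*ρ/(1-ρ))) * (1-ρ) ≤ 8*Cx^2*(1+(κ-1)*ρ) := by
          have heq : (4*Cx^2*(1 + 2*κ*ρ/(1-ρ))) * (1-ρ) = 4*Cx^2*((1-ρ) + 2*κ*ρ) := by
            field_simp
          rw [heq]
          nlinarith [sq_nonneg Cx]
        calc (4*Cx^2*(1 + 2*κ*ρ/(1-ρ))) * ((1-ρ)*(M:ℝ))
            = ((4*Cx^2*(1 + 2*κ*ρ/(1-ρ))) * (1-ρ)) * M := by ring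
          _ ≤ (8*Cx^2*(1+(κ-1)*ρ)) * M := mul_le_mul_of_nonneg_right hkey hMpos.le
          _ = 8 * Cx^2 * (1 + (κ-1)*ρ) * M := by ring
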